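/- arXiv:1910.08122 — 2 statements merged into one kernel-verified Lean document; each statement's English description precedes it below -/
import Mathlib

section
/- Let M : Fin k → (Fin n → ℤ) × (Fin n → ℤ) satisfy (M i) ⊙ (M j) = 0 in ℤ for all i, j, and let B ≥ 1 be a natural number bounding the absolute value of every entry of M. Suppose there exists a nonzero e : (Fin n → ℚ) × (Fin n → ℚ) undetectable for M over ℚ, and let d* be the minimum weight among all nonzero rational undetectable vectors for M. Then for every prime p with p > B^(2(d*−1)) · (2(d*−1))^(d*−1), the minimum weight of a nonzero undetectable vector over ZMod p for the reduction of M modulo p exists and equals d*. (For sufficiently large primes the embedded code attains exactly the integer distance d*, and no further distance improvement is possible.) -/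
/-- The symplectic product of two vectors `u v : (Fin n → R) × (Fin n → R)`,
where the first component is the X-part and the second the Z-part. -/
def symp {R : Type*} [CommRing R] {n : ℕ} (u v : (Fin n → R) × (Fin n → R)) : R :=
  ∑ j, (v.2 j * u.1 j - v.1 j * u.2 j)

/-- The weight of a symplectic vector: the number of registers on which it is nonzero. -/
def wt {R : Type*} [Zero R] [DecidableEq R] {n : ℕ} (e : (Fin n → R) × (Fin n → R)) : ℕ :=
  (Finset.univ.filter fun j : Fin n => (e.1 j, e.2 j) ≠ ((0 : R), (0 : R))).card

open Finset Matrix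


lemma amgm_prod_le {ι : Type*} [Fintype ι] (z : ι → ℝ) (hz : ∀ i, 0 ≤ z i) (c : ℝ) (hc : 0 ≤ c)
    (hsum : ∑ i, z i ≤ Fintype.card ι * c) : ∏ i, z i ≤ c ^ Fintype.card ι := by
  rcases isEmpty_or_nonempty ι with h | h
  · simp [Fintype.card_eq_zero]
  have hm : (0:ℝ) < Fintype.card ι := by
    have := Fintype.card_pos (α := ι); positivity
  have h1 := Real.geom_mean_le_arith_mean (Finset.univ : Finset ι) (fun _ => (1:ℝ)) z
    (fun _ _ => zero_le_one) (by simpa using hm) (fun i _ => hz i)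
  simp only [Real.rpow_one, Finset.sum_const, Finset.card_univ, nsmul_eq_mul, mul_one,
    one_mul] at h1
  -- h1 : (∏ i, z i) ^ ((Fintype.card ι : ℝ))⁻¹ ≤ (∑ i, z i) / Fintype.card ι
  have hprod : (0:ℝ) ≤ ∏ i, z i := Finset.prod_nonneg fun i _ => hz i
  have h2 : ((∏ i, z i) ^ ((Fintype.card ι : ℝ))⁻¹) ^ (Fintype.card ι : ℕ) = ∏ i, z i := by
    rw [← Real.rpow_natCast (((∏ i, z i) ^ ((Fintype.card ι : ℝ))⁻¹)) (Fintype.card ι),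
      ← Real.rpow_mul hprod, inv_mul_cancel₀ (ne_of_gt hm), Real.rpow_one]
  have h3 : (∑ i, z i) / Fintype.card ι ≤ c := by
    rw [div_le_iff₀ hm]; linarith [hsum]
  calc ∏ i, z i = ((∏ i, z i) ^ ((Fintype.card ι : ℝ))⁻¹) ^ (Fintype.card ι : ℕ) := h2.symm
    _ ≤ ((∑ i, z i) / Fintype.card ι) ^ (Fintype.card ι : ℕ) :=
        pow_le_pow_left₀ (Real.rpow_nonneg hprod _) h1 _
    _ ≤ c ^ Fintype.card ι := pow_le_pow_left₀ (div_nonneg (Finset.sum_nonneg fun i _ => hz i) hm.le) h3 _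

lemma hadamard_sq {ι : Type*} [Fintype ι] [DecidableEq ι] (Q : Matrix ι ι ℝ) (b : ℝ) (hb : 0 ≤ b)
    (h : ∀ i j, |Q i j| ≤ b) :
    Q.det ^ 2 ≤ ((Fintype.card ι : ℝ) * b ^ 2) ^ Fintype.card ι := by
  have hG : (Q * Qᴴ).PosSemidef := Matrix.posSemidef_self_mul_conjTranspose Q
  have hH := hG.1
  have hdet : (Q * Qᴴ).det = Q.det ^ 2 := by
    rw [Matrix.det_mul, Matrix.conjTranspose_eq_transpose_of_trivial, Matrix.det_transpose, sq]
  have hdet2 : (Q * Qᴴ).det = ∏ i, hH.eigenvalues i := by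
    simpa using hH.det_eq_prod_eigenvalues
  have htr : (Q * Qᴴ).trace = ∑ i, hH.eigenvalues i := by
    simpa using Matrix.IsHermitian.trace_eq_sum_eigenvalues hH
  have htr2 : (Q * Qᴴ).trace ≤ (Fintype.card ι : ℝ) * ((Fintype.card ι : ℝ) * b ^ 2) := by
    rw [Matrix.trace]
    have : ∀ i : ι, (Q * Qᴴ).diag i ≤ (Fintype.card ι : ℝ) * b ^ 2 := by
      intro i
      simp only [Matrix.diag_apply, Matrix.mul_apply, Matrix.conjTranspose_apply, star_trivial]
      calc ∑ j, Q i j * Q i j ≤ ∑ _j : ι, b ^ 2 := by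
            refine Finset.sum_le_sum fun j _ => ?_
            have h2 := pow_le_pow_left₀ (abs_nonneg _) (h i j) 2
            rw [sq_abs] at h2
            nlinarith [h2]
        _ = (Fintype.card ι : ℝ) * b ^ 2 := by simp [mul_comm]
    calc ∑ i, (Q * Qᴴ).diag i ≤ ∑ _i : ι, (Fintype.card ι : ℝ) * b ^ 2 :=
          Finset.sum_le_sum fun i _ => this i
      _ = (Fintype.card ι : ℝ) * ((Fintype.card ι : ℝ) * b ^ 2) := by simp [mul_comm]
  have := amgm_prod_le hH.eigenvalues (fun i => hG.eigenvalues_nonneg i)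
    ((Fintype.card ι : ℝ) * b ^ 2) (by positivity) (by rw [← htr]; exact htr2)
  rw [← hdet2, hdet] at this
  exact this

lemma exists_rows_det_ne_zero {k : ℕ} {ι : Type*} [Fintype ι] [DecidableEq ι]
    (A : Matrix (Fin k) ι ℚ) (hinj : Function.Injective A.mulVec) :
    ∃ r : ι → Fin k, (A.submatrix r id).det ≠ 0 := by
  have hrank : A.rank = Fintype.card ι := by
    rw [Matrix.rank, LinearMap.finrank_range_of_inj (f := A.mulVecLin)
      (by exact hinj), Module.finrank_fintype_fun_eq_card]
  have hspan : Submodule.span ℚ (Set.range A) = ⊤ := by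
    apply Submodule.eq_top_of_finrank_eq
    rw [show Set.range A = Set.range A.row from rfl, ← Matrix.rank_eq_finrank_span_row, hrank, Module.finrank_fintype_fun_eq_card]
  obtain ⟨b, hbsub, hbspan, hbind⟩ := exists_linearIndependent ℚ (Set.range A)
  rw [hspan] at hbspan
  have hbfin : b.Finite := hbind.setFinite
  haveI := hbfin.fintype
  have basis : Module.Basis ↥b ℚ (ι → ℚ) :=
    Module.Basis.mk hbind (by rw [Subtype.range_coe, hbspan])
  have hcard : Fintype.card ι = Fintype.card ↥b := by
    rw [← Module.finrank_fintype_fun_eq_card (R := ℚ) (η := ι),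
      Module.finrank_eq_card_basis basis]
  let g : ι ≃ ↥b := Fintype.equivOfCardEq hcard
  have hmem : ∀ t : ι, (↑(g t) : ι → ℚ) ∈ Set.range A := fun t => hbsub (g t).2
  choose r hr using hmem
  refine ⟨r, ?_⟩
  have hrows : LinearIndependent ℚ (fun t : ι => (A.submatrix r id) t) := by
    have : (fun t : ι => (A.submatrix r id) t) = fun t : ι => (↑(g t) : ι → ℚ) := by
      funext t; ext c; simpa [Matrix.submatrix_apply] using congrFun (hr t) c
    rw [this]
    exact hbind.comp g g.injective
  have hunit := Matrix.linearIndependent_rows_iff_isUnit.mp hrows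
  exact ((Matrix.isUnit_iff_isUnit_det _).mp hunit).ne_zero

lemma det_map_int {S : Type*} [CommRing S] {ι : Type*} [Fintype ι] [DecidableEq ι]
    (Q : Matrix ι ι ℤ) : (Q.map ((↑) : ℤ → S)).det = ((Q.det : ℤ) : S) := by
  have h := RingHom.map_det (Int.castRingHom S) Q
  rw [RingHom.mapMatrix_apply] at h
  simpa using h.symm

lemma modp_kernel_trivial {k : ℕ} {ι : Type*} [Fintype ι] [DecidableEq ι]
    (A : Matrix (Fin k) ι ℤ) (B : ℕ) (hA : ∀ i c, |A i c| ≤ (B : ℤ))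
    (hinj : Function.Injective (A.map ((↑) : ℤ → ℚ)).mulVec)
    (p : ℕ) (hp : p.Prime)
    (hlt : (Fintype.card ι * B ^ 2) ^ Fintype.card ι < p ^ 2)
    (x : ι → ZMod p) (hx : (A.map ((↑) : ℤ → ZMod p)).mulVec x = 0) : x = 0 := by
  haveI : Fact p.Prime := ⟨hp⟩
  obtain ⟨r, hdet⟩ := exists_rows_det_ne_zero (A.map ((↑) : ℤ → ℚ)) hinj
  set Q := A.submatrix r id with hQ
  have hdQ : ((Q.det : ℤ) : ℚ) ≠ 0 := by
    rw [← det_map_int]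
    simpa [Matrix.submatrix_map] using hdet
  have hd0 : Q.det ≠ 0 := fun h => hdQ (by rw [h]; simp)
  -- Hadamard bound
  have hreal : ((Q.det : ℝ)) ^ 2 ≤ ((Fintype.card ι : ℝ) * ((B : ℝ)) ^ 2) ^ Fintype.card ι := by
    have hmap : (Q.map ((↑) : ℤ → ℝ)).det = (Q.det : ℝ) := det_map_int Q
    have := hadamard_sq (Q.map ((↑) : ℤ → ℝ)) (B : ℝ) (by positivity) ?_
    · rwa [hmap] at this
    · intro i j
      simp only [Matrix.map_apply, ← Int.cast_abs]
      exact_mod_cast hA (r i) (id j)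
  have hint : Q.det ^ 2 ≤ ((Fintype.card ι * B ^ 2 : ℕ) : ℤ) ^ Fintype.card ι := by
    exact_mod_cast hreal
  -- p does not divide det
  have hnd : ¬ ((p : ℤ) ∣ Q.det) := by
    intro hdvd
    have h1 : (p : ℤ) ≤ |Q.det| := Int.le_of_dvd (abs_pos.mpr hd0) ((dvd_abs _ _).mpr hdvd)
    have h2 : (p : ℤ) ^ 2 ≤ Q.det ^ 2 := by
      have h4 := pow_le_pow_left₀ (show (0:ℤ) ≤ p by positivity) h1 2
      rwa [sq_abs] at h4
    have h3 : ((Fintype.card ι * B ^ 2 : ℕ) : ℤ) ^ Fintype.card ι < ((p : ℤ)) ^ 2 := by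
      exact_mod_cast hlt
    omega
  have hdp : ((Q.det : ℤ) : ZMod p) ≠ 0 := by
    rw [Ne, ZMod.intCast_zmod_eq_zero_iff_dvd]
    exact_mod_cast hnd
  have hunit : IsUnit (Q.map ((↑) : ℤ → ZMod p)) := by
    apply (Matrix.isUnit_iff_isUnit_det _).mpr
    rw [det_map_int]
    exact isUnit_iff_ne_zero.mpr hdp
  have hQx : (Q.map ((↑) : ℤ → ZMod p)).mulVec x = 0 := by
    funext t
    have := congrFun hx (r t)
    simpa [Matrix.mulVec, dotProduct, hQ, Matrix.submatrix_apply] using this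
  have := Matrix.mulVec_injective_iff_isUnit.mpr hunit
  have h0 : (Q.map ((↑) : ℤ → ZMod p)).mulVec 0 = 0 := Matrix.mulVec_zero _
  exact this (hQx.trans h0.symm)

lemma pair_ne_zero_iff {R : Type*} [Zero R] {n : ℕ} (e : (Fin n → R) × (Fin n → R)) :
    e ≠ 0 ↔ ∃ j, (e.1 j, e.2 j) ≠ ((0 : R), (0 : R)) := by
  rw [not_iff_comm, not_exists]
  constructor
  · intro h
    ext j
    · exact congrArg Prod.fst (not_ne_iff.mp (h j))
    · exact congrArg Prod.snd (not_ne_iff.mp (h j))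
  · intro h j
    rw [h]
    simp

lemma symp_eq_sum {R : Type*} [CommRing R] {n : ℕ} (u : (Fin n → ℤ) × (Fin n → ℤ))
    (g : (Fin n → R) × (Fin n → R)) (S : Finset (Fin n))
    (hg : ∀ j ∉ S, g.1 j = 0 ∧ g.2 j = 0) :
    symp (fun j => ((u.1 j : ℤ) : R), fun j => ((u.2 j : ℤ) : R)) g
      = (∑ s : {j // j ∈ S}, ((-(u.2 s.1) : ℤ) : R) * g.1 s.1)
        + ∑ s : {j // j ∈ S}, ((u.1 s.1 : ℤ) : R) * g.2 s.1 := by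
  unfold symp
  rw [Finset.sum_coe_sort S (fun j => ((-(u.2 j) : ℤ) : R) * g.1 j),
    Finset.sum_coe_sort S (fun j => ((u.1 j : ℤ) : R) * g.2 j), ← Finset.sum_add_distrib]
  rw [← Finset.sum_subset (Finset.subset_univ S) (fun j _ hj => by
    obtain ⟨ha, hb⟩ := hg j hj; simp [ha, hb])]
  refine Finset.sum_congr rfl fun j _ => ?_
  push_cast
  ring

lemma exists_int_vector {n k : ℕ} (M : Fin k → (Fin n → ℤ) × (Fin n → ℤ))
    (e : (Fin n → ℚ) × (Fin n → ℚ)) (he0 : e ≠ 0)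
    (hesymp : ∀ i, symp (fun j => ((M i).1 j : ℚ), fun j => ((M i).2 j : ℚ)) e = 0)
    (p : ℕ) (hp : p.Prime) :
    ∃ u : (Fin n → ℤ) × (Fin n → ℤ),
      (∀ i, symp (M i) u = 0) ∧ wt u = wt e ∧
      ¬ (∀ j, (p : ℤ) ∣ u.1 j ∧ (p : ℤ) ∣ u.2 j) := by
  classical
  set f : Fin n ⊕ Fin n → ℚ := Sum.elim e.1 e.2 with hf
  obtain ⟨b, hb⟩ := IsLocalization.exist_integer_multiples (nonZeroDivisors ℤ)
    (Finset.univ : Finset (Fin n ⊕ Fin n)) f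
  choose v hv using fun i => hb i (Finset.mem_univ i)
  have hbne : (b : ℤ) ≠ 0 := nonZeroDivisors.coe_ne_zero b
  have hvrat : ∀ i, ((v i : ℤ) : ℚ) = ((b : ℤ) : ℚ) * f i := by
    intro i
    have := hv i
    simpa [Algebra.smul_def, eq_comm] using this.symm
  have hvzero : ∀ i, v i = 0 ↔ f i = 0 := by
    intro i
    constructor
    · intro h
      have := hvrat i
      rw [h] at this
      have hb' : ((b : ℤ) : ℚ) ≠ 0 := by exact_mod_cast hbne
      field_simp at this
      exact (mul_eq_zero.mp (by exact_mod_cast this.symm)).resolve_left hb'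
    · intro h
      have := hvrat i
      rw [h, mul_zero] at this
      exact_mod_cast this
  -- v is not identically zero
  have hvne : ∃ i, v i ≠ 0 := by
    by_contra hcon
    push_neg at hcon
    apply he0
    ext j
    · have := (hvzero (Sum.inl j)).mp (hcon (Sum.inl j)); simpa [hf] using this
    · have := (hvzero (Sum.inr j)).mp (hcon (Sum.inr j)); simpa [hf] using this
  set g : ℤ := Finset.univ.gcd v with hg
  have hgne : g ≠ 0 := by
    rw [hg, Ne, Finset.gcd_eq_zero_iff]
    push_neg
    obtain ⟨i, hi⟩ := hvne
    exact ⟨i, Finset.mem_univ i, hi⟩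
  have hgdvd : ∀ i, g ∣ v i := fun i => Finset.gcd_dvd (Finset.mem_univ i)
  set u' : Fin n ⊕ Fin n → ℤ := fun i => v i / g with hu'
  have hgu : ∀ i, g * u' i = v i := fun i => Int.mul_ediv_cancel' (hgdvd i)
  refine ⟨(fun j => u' (Sum.inl j), fun j => u' (Sum.inr j)), ?_, ?_, ?_⟩
  · -- symplectic products vanish
    intro i
    -- first over ℚ for v
    have hsv : symp (M i) (fun j => v (Sum.inl j), fun j => v (Sum.inr j)) = 0 := by
      have hcast : ((symp (M i) (fun j => v (Sum.inl j), fun j => v (Sum.inr j)) : ℤ) : ℚ)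
          = ((b : ℤ) : ℚ) * symp (fun j => ((M i).1 j : ℚ), fun j => ((M i).2 j : ℚ)) e := by
        unfold symp
        push_cast
        rw [Finset.mul_sum]
        refine Finset.sum_congr rfl fun j _ => ?_
        rw [hvrat (Sum.inl j), hvrat (Sum.inr j)]
        simp only [hf, Sum.elim_inl, Sum.elim_inr]
        ring
      rw [hesymp i, mul_zero] at hcast
      exact_mod_cast hcast
    have hfac : symp (M i) (fun j => v (Sum.inl j), fun j => v (Sum.inr j))
        = g * symp (M i) (fun j => u' (Sum.inl j), fun j => u' (Sum.inr j)) := by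
      unfold symp
      dsimp only
      rw [Finset.mul_sum]
      refine Finset.sum_congr rfl fun j _ => ?_
      rw [← hgu (Sum.inl j), ← hgu (Sum.inr j)]
      ring
    rw [hfac] at hsv
    exact (mul_eq_zero.mp hsv).resolve_left hgne
  · -- weights agree
    unfold wt
    congr 1
    apply Finset.filter_congr
    intro j _
    simp only [ne_eq, Prod.mk.injEq, not_and, eq_iff_iff]
    have h1 : u' (Sum.inl j) = 0 ↔ e.1 j = 0 := by
      have hz := hvzero (Sum.inl j)
      simp only [hf, Sum.elim_inl] at hz
      constructor
      · intro h
        apply hz.mp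
        rw [← hgu (Sum.inl j), h, mul_zero]
      · intro h
        have hv0 := hz.mpr h
        have h5 := hgu (Sum.inl j)
        rw [hv0] at h5
        exact (mul_eq_zero.mp h5).resolve_left hgne
    have h2 : u' (Sum.inr j) = 0 ↔ e.2 j = 0 := by
      have hz := hvzero (Sum.inr j)
      simp only [hf, Sum.elim_inr] at hz
      constructor
      · intro h
        apply hz.mp
        rw [← hgu (Sum.inr j), h, mul_zero]
      · intro h
        have hv0 := hz.mpr h
        have h5 := hgu (Sum.inr j)
        rw [hv0] at h5
        exact (mul_eq_zero.mp h5).resolve_left hgne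
    tauto
  · -- not all entries divisible by p
    intro hall
    have : ∀ i, (p : ℤ) ∣ u' i := by
      intro i
      cases i with
      | inl j => exact (hall j).1
      | inr j => exact (hall j).2
    have hdg : g * p ∣ g := by
      rw [hg]
      apply Finset.dvd_gcd
      intro i _
      rw [← hgu i]
      exact mul_dvd_mul_left g (this i)
    have hdg1 : g * (p : ℤ) ∣ g * 1 := by rwa [mul_one]
    have : (p : ℤ) ∣ 1 := (mul_dvd_mul_iff_left hgne).mp hdg1
    have := Int.le_of_dvd one_pos this
    have := hp.one_lt
    omega

lemma lower_bound {n k : ℕ} (M : Fin k → (Fin n → ℤ) × (Fin n → ℤ)) (B : ℕ) (hB : 1 ≤ B)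
    (hbound : ∀ i : Fin k, ∀ j : Fin n, |(M i).1 j| ≤ (B : ℤ) ∧ |(M i).2 j| ≤ (B : ℤ))
    (dstar : ℕ)
    (hlb : ∀ w ∈ {w : ℕ | ∃ e : (Fin n → ℚ) × (Fin n → ℚ), e ≠ 0 ∧
      (∀ i : Fin k, symp (fun j => ((M i).1 j : ℚ), fun j => ((M i).2 j : ℚ)) e = 0) ∧
      wt e = w}, dstar ≤ w)
    (p : ℕ) (hp : p.Prime)
    (hcut : B ^ (2 * (dstar - 1)) * (2 * (dstar - 1)) ^ (dstar - 1) < p)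
    (f : (Fin n → ZMod p) × (Fin n → ZMod p)) (hf0 : f ≠ 0)
    (hfs : ∀ i : Fin k, symp (fun j => ((M i).1 j : ZMod p), fun j => ((M i).2 j : ZMod p)) f = 0) :
    dstar ≤ wt f := by
  classical
  by_contra hcon
  push_neg at hcon
  set S := Finset.univ.filter (fun j : Fin n => (f.1 j, f.2 j) ≠ ((0 : ZMod p), 0)) with hS
  have hwtf : wt f = S.card := rfl
  have hSf : ∀ j ∉ S, f.1 j = 0 ∧ f.2 j = 0 := by
    intro j hj
    simp only [hS, Finset.mem_filter, Finset.mem_univ, true_and, not_not] at hj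
    exact ⟨congrArg Prod.fst hj, congrArg Prod.snd hj⟩
  obtain ⟨j0, hj0⟩ := (pair_ne_zero_iff f).mp hf0
  have hj0S : j0 ∈ S := by
    rw [hS]
    exact Finset.mem_filter.mpr ⟨Finset.mem_univ _, hj0⟩
  have hw1 : 1 ≤ S.card := Finset.card_pos.mpr ⟨j0, hj0S⟩
  set A : Matrix (Fin k) ({j // j ∈ S} ⊕ {j // j ∈ S}) ℤ :=
    Matrix.of (fun i => Sum.elim (fun s => -((M i).2 s.1)) (fun s => (M i).1 s.1)) with hA
  have hAb : ∀ i c, |A i c| ≤ (B : ℤ) := by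
    intro i c
    cases c with
    | inl s => simpa [hA, abs_neg] using (hbound i s.1).2
    | inr s => simpa [hA] using (hbound i s.1).1
  have hker : ∀ c, (A.map ((↑) : ℤ → ℚ)).mulVec c = 0 → c = 0 := by
    intro c hc
    set gq : (Fin n → ℚ) × (Fin n → ℚ) :=
      (fun j => if h : j ∈ S then c (Sum.inl ⟨j, h⟩) else 0,
       fun j => if h : j ∈ S then c (Sum.inr ⟨j, h⟩) else 0) with hgq
    have hgS : ∀ j ∉ S, gq.1 j = 0 ∧ gq.2 j = 0 := by
      intro j hj
      constructor <;> simp [hgq, dif_neg hj]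
    have e1 : ∀ s : {j // j ∈ S}, gq.1 s.1 = c (Sum.inl s) := by
      intro s; simp [hgq, dif_pos s.2]
    have e2 : ∀ s : {j // j ∈ S}, gq.2 s.1 = c (Sum.inr s) := by
      intro s; simp [hgq, dif_pos s.2]
    have hsymp : ∀ i, symp (fun j => ((M i).1 j : ℚ), fun j => ((M i).2 j : ℚ)) gq = 0 := by
      intro i
      have hc' := congrFun hc i
      rw [Matrix.mulVec, dotProduct, Fintype.sum_sum_type] at hc'
      simp only [hA, Matrix.map_apply, Matrix.of_apply, Sum.elim_inl, Sum.elim_inr,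
        Pi.zero_apply] at hc'
      have hA1 : (∑ s : {j // j ∈ S}, ((-((M i).2 s.1) : ℤ) : ℚ) * gq.1 s.1)
          = ∑ s : {j // j ∈ S}, ((-((M i).2 s.1) : ℤ) : ℚ) * c (Sum.inl s) :=
        Finset.sum_congr rfl fun s _ => by rw [e1 s]
      have hA2 : (∑ s : {j // j ∈ S}, (((M i).1 s.1 : ℤ) : ℚ) * gq.2 s.1)
          = ∑ s : {j // j ∈ S}, (((M i).1 s.1 : ℤ) : ℚ) * c (Sum.inr s) :=
        Finset.sum_congr rfl fun s _ => by rw [e2 s]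
      rw [symp_eq_sum (M i) gq S hgS, hA1, hA2]
      exact hc'
    by_cases hgq0 : gq = 0
    · funext t
      cases t with
      | inl s =>
        have := congrFun (congrArg Prod.fst hgq0) s.1
        simp only [Prod.fst_zero, Prod.snd_zero, Pi.zero_apply] at this
        rw [← e1 s]
        exact this
      | inr s =>
        have := congrFun (congrArg Prod.snd hgq0) s.1
        simp only [Prod.fst_zero, Prod.snd_zero, Pi.zero_apply] at this
        rw [← e2 s]
        exact this
    · exfalso
      have hwle : wt gq ≤ S.card := by
        unfold wt
        apply Finset.card_le_card
        intro j hj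
        simp only [Finset.mem_filter, Finset.mem_univ, true_and] at hj
        by_contra hjS
        exact hj (by simp [dif_neg hjS, hgS j hjS])
      have := hlb (wt gq) ⟨gq, hgq0, hsymp, rfl⟩
      omega
  have hinj : Function.Injective (A.map ((↑) : ℤ → ℚ)).mulVec := by
    intro c₁ c₂ h12
    have := hker (c₁ - c₂) (by rw [Matrix.mulVec_sub, h12, sub_self])
    exact sub_eq_zero.mp this
  have hcard : Fintype.card ({j // j ∈ S} ⊕ {j // j ∈ S}) = 2 * S.card := by
    simp [Fintype.card_sum, Fintype.card_coe, two_mul]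
  have hlt : (Fintype.card ({j // j ∈ S} ⊕ {j // j ∈ S}) * B ^ 2)
      ^ Fintype.card ({j // j ∈ S} ⊕ {j // j ∈ S}) < p ^ 2 := by
    rw [hcard]
    have hwD : S.card ≤ dstar - 1 := by omega
    calc (2 * S.card * B ^ 2) ^ (2 * S.card)
        = (2 * S.card) ^ (2 * S.card) * (B ^ 2) ^ (2 * S.card) := by rw [mul_pow]
      _ ≤ (2 * (dstar - 1)) ^ (2 * (dstar - 1)) * (B ^ 2) ^ (2 * (dstar - 1)) :=
          Nat.mul_le_mul
            (le_trans (Nat.pow_le_pow_left (by omega) _)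
              (Nat.pow_le_pow_right (by omega) (by omega)))
            (Nat.pow_le_pow_right (Nat.one_le_pow _ _ (by omega)) (by omega))
      _ = (B ^ (2 * (dstar - 1)) * (2 * (dstar - 1)) ^ (dstar - 1)) ^ 2 := by ring
      _ < p ^ 2 := Nat.pow_lt_pow_left hcut (by norm_num)
  set x : ({j // j ∈ S} ⊕ {j // j ∈ S}) → ZMod p :=
    Sum.elim (fun s => f.1 s.1) (fun s => f.2 s.1) with hx
  have hxeq : (A.map ((↑) : ℤ → ZMod p)).mulVec x = 0 := by
    funext i
    have := hfs i
    rw [symp_eq_sum (M i) f S hSf] at this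
    rw [Matrix.mulVec, dotProduct, Fintype.sum_sum_type]
    simp only [hA, Matrix.map_apply, Matrix.of_apply, Sum.elim_inl, Sum.elim_inr, hx,
      Pi.zero_apply]
    convert this using 2 <;> push_cast <;> ring
  have hx0 := modp_kernel_trivial A B hAb hinj p hp hlt x hxeq
  have h1 : f.1 j0 = 0 := by
    have := congrFun hx0 (Sum.inl ⟨j0, hj0S⟩)
    simpa [hx] using this
  have h2 : f.2 j0 = 0 := by
    have := congrFun hx0 (Sum.inr ⟨j0, hj0S⟩)
    simpa [hx] using this
  exact hj0 (by rw [h1, h2])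

/-- For primes `p` above the cutoff `B^(2(d*-1)) (2(d*-1))^(d*-1)`, the embedded code
attains exactly the integer distance `d*`; no further improvement from embedding. -/
theorem integer_distance_attained (n k : ℕ) (M : Fin k → (Fin n → ℤ) × (Fin n → ℤ))
    (hcomm : ∀ i j : Fin k, symp (M i) (M j) = 0)
    (B : ℕ) (hB : 1 ≤ B)
    (hbound : ∀ i : Fin k, ∀ j : Fin n, |(M i).1 j| ≤ (B : ℤ) ∧ |(M i).2 j| ≤ (B : ℤ))
    (dstar : ℕ)
    (hdstar : IsLeast {w : ℕ | ∃ e : (Fin n → ℚ) × (Fin n → ℚ), e ≠ 0 ∧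
      (∀ i : Fin k, symp (fun j => ((M i).1 j : ℚ), fun j => ((M i).2 j : ℚ)) e = 0) ∧
      wt e = w} dstar)
    (p : ℕ) (hp : p.Prime)
    (hcut : B ^ (2 * (dstar - 1)) * (2 * (dstar - 1)) ^ (dstar - 1) < p) :
    IsLeast {w : ℕ | ∃ e : (Fin n → ZMod p) × (Fin n → ZMod p), e ≠ 0 ∧
      (∀ i : Fin k, symp (fun j => ((M i).1 j : ZMod p), fun j => ((M i).2 j : ZMod p)) e = 0) ∧
      wt e = w} dstar := by
  classical
  obtain ⟨⟨e, he0, hesymp, hewt⟩, hlb⟩ := hdstar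
  have hlow : ∀ w ∈ {w : ℕ | ∃ e : (Fin n → ZMod p) × (Fin n → ZMod p), e ≠ 0 ∧
      (∀ i : Fin k, symp (fun j => ((M i).1 j : ZMod p), fun j => ((M i).2 j : ZMod p)) e = 0) ∧
      wt e = w} , dstar ≤ w := by
    rintro w ⟨g, hg0, hgs, rfl⟩
    exact lower_bound M B hB hbound dstar hlb p hp hcut g hg0 hgs
  -- construct a mod-p vector of weight dstar
  obtain ⟨u, husymp, huwt, hup⟩ := exists_int_vector M e he0 hesymp p hp
  set ebar : (Fin n → ZMod p) × (Fin n → ZMod p) :=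
    (fun j => ((u.1 j : ℤ) : ZMod p), fun j => ((u.2 j : ℤ) : ZMod p)) with hebar
  have hebar0 : ebar ≠ 0 := by
    intro h0
    apply hup
    intro j
    constructor
    · have := congrFun (congrArg Prod.fst h0) j
      simp only [hebar, Pi.zero_apply] at this
      exact (ZMod.intCast_zmod_eq_zero_iff_dvd _ _).mp this
    · have := congrFun (congrArg Prod.snd h0) j
      simp only [hebar, Pi.zero_apply] at this
      exact (ZMod.intCast_zmod_eq_zero_iff_dvd _ _).mp this
  have hebars : ∀ i : Fin k,
      symp (fun j => ((M i).1 j : ZMod p), fun j => ((M i).2 j : ZMod p)) ebar = 0 := by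
    intro i
    have := husymp i
    have hcast : ((symp (M i) u : ℤ) : ZMod p)
        = symp (fun j => ((M i).1 j : ZMod p), fun j => ((M i).2 j : ZMod p)) ebar := by
      unfold symp
      push_cast
      rfl
    rw [this] at hcast
    simpa using hcast.symm
  have hwle : wt ebar ≤ dstar := by
    rw [← huwt.trans hewt]
    unfold wt
    apply Finset.card_le_card
    intro j hj
    simp only [Finset.mem_filter, Finset.mem_univ, true_and] at hj ⊢
    intro hc
    apply hj
    have hc1 : u.1 j = 0 := congrArg Prod.fst hc
    have hc2 : u.2 j = 0 := congrArg Prod.snd hc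
    simp [hebar, hc1, hc2]
  have hmem : wt ebar ∈ {w : ℕ | ∃ e : (Fin n → ZMod p) × (Fin n → ZMod p), e ≠ 0 ∧
      (∀ i : Fin k, symp (fun j => ((M i).1 j : ZMod p), fun j => ((M i).2 j : ZMod p)) e = 0) ∧
      wt e = w} := ⟨ebar, hebar0, hebars, rfl⟩
  have heq : wt ebar = dstar := le_antisymm hwle (hlow _ hmem)
  exact ⟨heq ▸ hmem, hlow⟩
end

section
/- Let p be a prime, n, k, d natural numbers with d ≥ 1, and set t = (d − 1) / 2 (natural-number floor division). Let M : Fin k → (Fin n → ZMod p) × (Fin n → ZMod p) and suppose every nonzero e : (Fin n → ZMod p) × (Fin n → ZMod p) that is undetectable for M has weight at least d. Then ∑_{j=0}^{t} (Nat.choose n j) · (p² − 1)^j ≤ p^k. (The qudit quantum Hamming bound for non-degenerate stabilizer codes.) -/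
open Finset

-- fiber count
lemma card_supp_fiber {α : Type*} [Fintype α] [DecidableEq α] [Zero α] {n : ℕ}
    (s : Finset (Fin n)) :
    (Finset.univ.filter fun f : Fin n → α =>
      (Finset.univ.filter fun j => f j ≠ 0) = s).card = (Fintype.card α - 1) ^ s.card := by
  classical
  rw [← Fintype.card_subtype]
  have E : {f : Fin n → α // (Finset.univ.filter fun j => f j ≠ 0) = s} ≃
      ((i : s) → {a : α // a ≠ 0}) :=
    { toFun := fun f i => ⟨f.1 i, by
        have hi : (i : Fin n) ∈ Finset.univ.filter fun j => f.1 j ≠ 0 := by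
          rw [f.2]; exact i.2
        simpa using hi⟩
      invFun := fun g => ⟨fun j => if h : j ∈ s then (g ⟨j, h⟩).1 else 0, by
        ext j
        simp only [mem_filter, mem_univ, true_and]
        constructor
        · intro hj
          by_contra h
          simp [h] at hj
        · intro hj
          simp only [dif_pos hj]
          exact (g ⟨j, hj⟩).2⟩
      left_inv := fun f => by
        ext j
        by_cases h : j ∈ s
        · simp [h]
        · simp only [dif_neg h]
          by_contra hne
          have hj : j ∈ Finset.univ.filter fun j => f.1 j ≠ 0 := by simpa using Ne.symm hne
          rw [f.2] at hj
          exact h hj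
      right_inv := fun g => by
        ext i
        simp }
  rw [Fintype.card_congr E, Fintype.card_pi]
  have hc : Fintype.card {a : α // a ≠ 0} = Fintype.card α - 1 := by
    rw [Fintype.card_subtype_compl, Fintype.card_subtype_eq]
  simp [hc, Finset.prod_const]

lemma card_ball {α : Type*} [Fintype α] [DecidableEq α] [Zero α] (n t : ℕ) :
    (Finset.univ.filter fun f : Fin n → α =>
      (Finset.univ.filter fun j => f j ≠ 0).card ≤ t).card
      = ∑ j ∈ Finset.range (t + 1), n.choose j * (Fintype.card α - 1) ^ j := by
  classical
  rw [Finset.card_eq_sum_card_fiberwise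
    (f := fun f : Fin n → α => Finset.univ.filter fun j => f j ≠ 0)
    (t := (Finset.univ : Finset (Fin n)).powerset.filter fun s => s.card ≤ t)
    (by intro f hf
        simp only [Finset.mem_coe, mem_filter, mem_powerset] at *
        exact ⟨subset_univ _, hf.2⟩)]
  have hfib : ∀ s ∈ (Finset.univ : Finset (Fin n)).powerset.filter fun s => s.card ≤ t,
      ((Finset.univ.filter fun f : Fin n → α =>
        (Finset.univ.filter fun j => f j ≠ 0).card ≤ t).filter
        (fun f => (Finset.univ.filter fun j => f j ≠ 0) = s)).card
      = (Fintype.card α - 1) ^ s.card := by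
    intro s hs
    rw [Finset.filter_filter]
    rw [← card_supp_fiber (α := α) s]
    congr 1
    apply Finset.filter_congr
    intro f _
    simp only [mem_filter, mem_powerset] at hs
    constructor
    · rintro ⟨-, h⟩; exact h
    · intro h; exact ⟨h ▸ hs.2, h⟩
  rw [Finset.sum_congr rfl hfib]
  have hsplit : (Finset.univ : Finset (Fin n)).powerset.filter (fun s => s.card ≤ t) =
      (Finset.range (t + 1)).biUnion fun j => Finset.powersetCard j Finset.univ := by
    ext s
    simp [Finset.mem_powersetCard, Nat.lt_succ_iff, subset_univ]
  rw [hsplit, Finset.sum_biUnion]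
  · apply Finset.sum_congr rfl
    intro j hj
    have : ∀ s ∈ Finset.powersetCard j (Finset.univ : Finset (Fin n)),
        (Fintype.card α - 1) ^ s.card = (Fintype.card α - 1) ^ j := by
      intro s hs
      rw [(Finset.mem_powersetCard.mp hs).2]
    rw [Finset.sum_congr rfl this, Finset.sum_const, Finset.card_powersetCard,
      Finset.card_univ, Fintype.card_fin, smul_eq_mul]
  · intro a ha b hb hab
    simp only [Finset.mem_coe, Finset.mem_range] at ha hb
    apply Finset.disjoint_left.mpr
    intro s hsa hsb
    rw [Finset.mem_powersetCard] at hsa hsb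
    exact hab (hsa.2 ▸ hsb.2 ▸ rfl)

lemma symp_sub {R : Type*} [CommRing R] {n : ℕ} (u a b : (Fin n → R) × (Fin n → R)) :
    symp u (a - b) = symp u a - symp u b := by
  unfold symp
  rw [← Finset.sum_sub_distrib]
  apply Finset.sum_congr rfl
  intro j _
  simp only [Prod.fst_sub, Prod.snd_sub, Pi.sub_apply]
  ring

lemma wt_sub_le {R : Type*} [CommRing R] [DecidableEq R] {n : ℕ}
    (a b : (Fin n → R) × (Fin n → R)) : wt (a - b) ≤ wt a + wt b := by
  unfold wt
  refine le_trans (Finset.card_le_card ?_) (Finset.card_union_le _ _)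
  intro j hj
  rw [Finset.mem_filter] at hj
  by_contra h
  simp only [Finset.mem_union, Finset.mem_filter, Finset.mem_univ, true_and, not_or,
    not_not, Prod.mk.injEq] at h
  obtain ⟨h1, h2⟩ := h
  apply hj.2
  simp [Prod.fst_sub, Prod.snd_sub, Pi.sub_apply, h1.1, h1.2, h2.1, h2.2, sub_zero]

/-- The qudit quantum Hamming bound for non-degenerate stabilizer codes. -/
theorem quantum_hamming_bound (p n k d : ℕ) (hp : p.Prime) (hd : 1 ≤ d)
    (M : Fin k → (Fin n → ZMod p) × (Fin n → ZMod p))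
    (hdist : ∀ e : (Fin n → ZMod p) × (Fin n → ZMod p), e ≠ 0 →
      (∀ i : Fin k, symp (M i) e = 0) → d ≤ wt e) :
    ∑ j ∈ Finset.range ((d - 1) / 2 + 1), Nat.choose n j * (p ^ 2 - 1) ^ j ≤ p ^ k := by
  classical
  haveI : Fact p.Prime := ⟨hp⟩
  set t := (d - 1) / 2 with ht
  set A := ZMod p × ZMod p
  -- cardinality of the ball in pairs
  have hcardA : Fintype.card A = p ^ 2 := by
    simp [A, Fintype.card_prod, ZMod.card, sq]
  set B := Finset.univ.filter fun e : (Fin n → ZMod p) × (Fin n → ZMod p) => wt e ≤ t with hB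
  have hBcard : B.card = ∑ j ∈ Finset.range (t + 1), n.choose j * (p ^ 2 - 1) ^ j := by
    rw [← hcardA, ← card_ball (α := A) n t]
    have key : ∀ e : (Fin n → ZMod p) × (Fin n → ZMod p),
        wt e = (Finset.univ.filter fun j => (fun j => (e.1 j, e.2 j)) j ≠ 0).card := fun e => rfl
    refine Finset.card_bij' (fun e _ => fun j => (e.1 j, e.2 j))
      (fun g _ => (fun j => (g j).1, fun j => (g j).2)) ?_ ?_ ?_ ?_
    · intro e he
      simp only [hB, Finset.mem_filter, Finset.mem_univ, true_and] at he ⊢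
      rw [← key]
      exact he
    · intro g hg
      simp only [hB, Finset.mem_filter, Finset.mem_univ, true_and] at hg ⊢
      rw [key]
      exact hg
    · intro e _; rfl
    · intro g _; rfl
  -- injectivity of the syndrome map on B
  have hinj : Set.InjOn (fun e : (Fin n → ZMod p) × (Fin n → ZMod p) =>
      fun i : Fin k => symp (M i) e) B := by
    intro a ha b hb hab
    by_contra hne
    have hsub : ∀ i, symp (M i) (a - b) = 0 := by
      intro i
      rw [symp_sub]
      have := congrFun hab i
      simp only at this
      rw [this, sub_self]
    have hdd := hdist (a - b) (sub_ne_zero.mpr hne) hsub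
    have hw := wt_sub_le a b
    simp only [hB, Finset.coe_filter, Set.mem_setOf_eq, Finset.mem_univ, true_and] at ha hb
    omega
  have hle : B.card ≤ Fintype.card (Fin k → ZMod p) := by
    rw [← Fintype.card_coe B]
    exact Fintype.card_le_of_injective
      (fun e => (fun i => symp (M i) e.1)) (fun x y hxy => by
        ext1
        exact hinj (by exact_mod_cast x.2) (by exact_mod_cast y.2) hxy)
  have hcardk : Fintype.card (Fin k → ZMod p) = p ^ k := by
    simp [ZMod.card]
  rw [hcardk] at hle
  calc ∑ j ∈ Finset.range (t + 1), Nat.choose n j * (p ^ 2 - 1) ^ j = B.card := hBcard.symm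
    _ ≤ p ^ k := hle
end
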